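/- Let R be a ring and n a non-negative integer. A right R-module M is n-weak flat if and only if its character module M* = Hom_ℤ(M, ℚ/ℤ) is an n-weak injective left R-module. -/

import Mathlib

/-! Definitions for `n`-weak injective and `n`-weak flat modules over an arbitrary
(associative, unital, possibly noncommutative) ring `R`, following
Amini–Amzil–Bennis, "On n-weak injective and n-weak flat modules".

Left `R`-modules are types with `[Module R M]`; right `R`-modules are types with
`[Module Rᵐᵒᵖ M]`.  `Ext` is the derived functor of the ℤ-linear Yoneda functor on
`ModuleCat R`, and `Tor` is obtained as the left derived functor of the balanced
tensor product `N ⊗_R -` (constructed as a quotient of the ℤ-tensor product). -/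

open CategoryTheory Limits TensorProduct

noncomputable section

universe u

namespace NWeak

variable (R : Type u) [Ring R]

/-- A left `R`-module `U` is *`n`-super finitely presented* if it admits a resolution
`⋯ → F_{n+1} → F_n → ⋯ → F_1 → F_0 → U → 0` by projective modules in which `F_i` is
finitely generated for every `i ≥ n`. -/
def IsNSuperFP (n : ℕ) (U : Type u) [AddCommGroup U] [Module R U] : Prop :=
  ∃ (F : ℕ → ModuleCat.{u} R) (d : ∀ i, F (i + 1) ⟶ F i) (ε : F 0 →ₗ[R] U),
    (∀ i, Module.Projective R (F i)) ∧
    (∀ i, n ≤ i → Module.Finite R (F i)) ∧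
    Function.Surjective ε ∧
    Function.Exact (d 0) ε ∧
    (∀ i, Function.Exact (d (i + 1)) (d i))

/-- A left `R`-module `K` is *special super finitely presented* (relative to `n`) if
there are an `n`-super finitely presented module `U` and a resolution
`⋯ → F_{n+1} → F_n → ⋯ → F_0 → U → 0` as above such that `K ≅ Im (F_n → F_{n-1})`,
where for `n = 0` we read `K_{-1} := U`. -/
def IsSpecialSFP (n : ℕ) (K : Type u) [AddCommGroup K] [Module R K] : Prop :=
  ∃ (F : ℕ → ModuleCat.{u} R) (d : ∀ i, F (i + 1) ⟶ F i) (U : ModuleCat.{u} R)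
    (ε : F 0 ⟶ U),
    (∀ i, Module.Projective R (F i)) ∧
    (∀ i, n ≤ i → Module.Finite R (F i)) ∧
    Function.Surjective ε ∧
    Function.Exact (d 0) ε ∧
    (∀ i, Function.Exact (d (i + 1)) (d i)) ∧
    (match n with
      | 0 => Nonempty (K ≃ₗ[R] U)
      | m + 1 => Nonempty (K ≃ₗ[R] LinearMap.range (d m).hom))

/-- Vanishing of `Ext_R^i(K, M)` for left `R`-modules. -/
def extVanish (i : ℕ) (K : Type u) [AddCommGroup K] [Module R K]
    (M : Type u) [AddCommGroup M] [Module R M] : Prop :=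
  Subsingleton (((Ext ℤ (ModuleCat.{u} R) i).obj
    (Opposite.op (ModuleCat.of R K))).obj (ModuleCat.of R M))

/-- A left `R`-module `M` is *`n`-weak injective* if `Ext_R^{n+1}(U, M) = 0` for every
`n`-super finitely presented left `R`-module `U`. -/
def IsNWeakInjective (n : ℕ) (M : Type u) [AddCommGroup M] [Module R M] : Prop :=
  ∀ (U : ModuleCat.{u} R), IsNSuperFP R n U → extVanish R (n + 1) U M

/-- The left `R`-module `M` has *`n`-weak injective dimension at most `k`* if
`Ext_R^{k+1}(K, M) = 0` for every special super finitely presented left `R`-module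
`K`. -/
def WIDimLE (n k : ℕ) (M : Type u) [AddCommGroup M] [Module R M] : Prop :=
  ∀ (K : ModuleCat.{u} R), IsSpecialSFP R n K → extVanish R (k + 1) K M

/-! ### The balanced tensor product and Tor -/

/-- The additive subgroup of `N ⊗[ℤ] K` generated by the balancing relations
`(n·r) ⊗ k - n ⊗ (r·k)`. -/
def balRel (N : Type u) [AddCommGroup N] [Module Rᵐᵒᵖ N]
    (K : Type u) [AddCommGroup K] [Module R K] : AddSubgroup (N ⊗[ℤ] K) :=
  AddSubgroup.closure
    {x | ∃ (a : N) (r : R) (b : K),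
      x = (MulOpposite.op r • a) ⊗ₜ[ℤ] b - a ⊗ₜ[ℤ] (r • b)}

/-- The balanced tensor product `N ⊗_R K` of a right `R`-module `N` and a left
`R`-module `K`, realized as a quotient of `N ⊗[ℤ] K`. -/
def RTensor (N : Type u) [AddCommGroup N] [Module Rᵐᵒᵖ N]
    (K : Type u) [AddCommGroup K] [Module R K] : Type u :=
  (N ⊗[ℤ] K) ⧸ balRel R N K

instance (N : Type u) [AddCommGroup N] [Module Rᵐᵒᵖ N]
    (K : Type u) [AddCommGroup K] [Module R K] : AddCommGroup (RTensor R N K) :=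
  inferInstanceAs (AddCommGroup ((N ⊗[ℤ] K) ⧸ balRel R N K))

variable {R}

/-- Functoriality of the balanced tensor product in the left-module variable. -/
def balMapRight (N : Type u) [AddCommGroup N] [Module Rᵐᵒᵖ N]
    {K K' : Type u} [AddCommGroup K] [Module R K] [AddCommGroup K'] [Module R K']
    (f : K →ₗ[R] K') : RTensor R N K →+ RTensor R N K' :=
  QuotientAddGroup.map _ _
    (TensorProduct.map (LinearMap.id : N →ₗ[ℤ] N) (f.restrictScalars ℤ)).toAddMonoidHom
    (by
      rw [balRel, AddSubgroup.closure_le]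
      rintro x ⟨a, r, b, rfl⟩
      simp only [SetLike.mem_coe, AddSubgroup.mem_comap, LinearMap.toAddMonoidHom_coe,
        map_sub, TensorProduct.map_tmul, LinearMap.coe_restrictScalars, LinearMap.id_coe,
        id_eq, LinearMap.map_smul]
      exact AddSubgroup.subset_closure ⟨a, r, f b, rfl⟩)

/-- Functoriality of the balanced tensor product in the right-module variable. -/
def balMapLeft (K : Type u) [AddCommGroup K] [Module R K]
    {N N' : Type u} [AddCommGroup N] [Module Rᵐᵒᵖ N] [AddCommGroup N'] [Module Rᵐᵒᵖ N']
    (g : N →ₗ[Rᵐᵒᵖ] N') : RTensor R N K →+ RTensor R N' K :=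
  QuotientAddGroup.map _ _
    (TensorProduct.map (g.restrictScalars ℤ) (LinearMap.id : K →ₗ[ℤ] K)).toAddMonoidHom
    (by
      rw [balRel, AddSubgroup.closure_le]
      rintro x ⟨a, r, b, rfl⟩
      simp only [SetLike.mem_coe, AddSubgroup.mem_comap, LinearMap.toAddMonoidHom_coe,
        map_sub, TensorProduct.map_tmul, LinearMap.coe_restrictScalars, LinearMap.id_coe,
        id_eq, LinearMap.map_smul]
      exact AddSubgroup.subset_closure ⟨g a, r, b, rfl⟩)

lemma balMapRight_mk (N : Type u) [AddCommGroup N] [Module Rᵐᵒᵖ N]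
    {K K' : Type u} [AddCommGroup K] [Module R K] [AddCommGroup K'] [Module R K']
    (f : K →ₗ[R] K') (y : N ⊗[ℤ] K) :
    balMapRight N f (QuotientAddGroup.mk y)
      = QuotientAddGroup.mk (TensorProduct.map (LinearMap.id : N →ₗ[ℤ] N)
          (f.restrictScalars ℤ) y) := rfl

variable (R)

/-- The functor `K ↦ N ⊗_R K` from left `R`-modules to abelian groups, for a fixed
right `R`-module `N`. -/
def tensorFunctor (N : Type u) [AddCommGroup N] [Module Rᵐᵒᵖ N] :
    ModuleCat.{u} R ⥤ AddCommGrpCat.{u} where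
  obj K := AddCommGrpCat.of (RTensor R N K)
  map {K K'} f := AddCommGrpCat.ofHom (balMapRight N f.hom)
  map_id K := by
    refine AddCommGrpCat.ext fun x => ?_
    refine QuotientAddGroup.induction_on x fun y => ?_
    show balMapRight N (𝟙 K : K ⟶ K).hom (QuotientAddGroup.mk y) = QuotientAddGroup.mk y
    rw [ModuleCat.hom_id, balMapRight_mk]
    congr 1
    refine TensorProduct.induction_on y (by simp) (fun a b => by simp) ?_
    intro s t hs ht
    simp_all [map_add]
  map_comp {K K' K''} f g := by
    refine AddCommGrpCat.ext fun x => ?_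
    refine QuotientAddGroup.induction_on x fun y => ?_
    show balMapRight N (f ≫ g).hom (QuotientAddGroup.mk y)
      = balMapRight N g.hom (balMapRight N f.hom (QuotientAddGroup.mk y))
    rw [ModuleCat.hom_comp, balMapRight_mk, balMapRight_mk, balMapRight_mk]
    congr 1
    refine TensorProduct.induction_on y (by simp) (fun a b => by simp) ?_
    intro s t hs ht
    simp_all [map_add]

instance (N : Type u) [AddCommGroup N] [Module Rᵐᵒᵖ N] : (tensorFunctor R N).Additive where
  map_add {K K'} {f g} := by
    refine AddCommGrpCat.ext fun x => ?_
    refine QuotientAddGroup.induction_on x fun y => ?_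
    show balMapRight N (f + g).hom (QuotientAddGroup.mk y)
      = balMapRight N f.hom (QuotientAddGroup.mk y) + balMapRight N g.hom (QuotientAddGroup.mk y)
    rw [ModuleCat.hom_add, balMapRight_mk, balMapRight_mk, balMapRight_mk]
    erw [← QuotientAddGroup.mk_add]
    congr 1
    refine TensorProduct.induction_on y (by simp)
      (fun a b => by
        simp only [TensorProduct.map_tmul, LinearMap.coe_restrictScalars, LinearMap.id_coe, id_eq]
        rw [show (f.hom + g.hom) b = f.hom b + g.hom b from rfl, TensorProduct.tmul_add]) ?_
    intro s t hs ht
    simp_all [map_add]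
    abel

/-- Vanishing of `Tor_i^R(N, K)` for a right `R`-module `N` and a left `R`-module `K`:
the `i`-th left derived functor of `N ⊗_R -` vanishes at `K`. -/
def torVanish (i : ℕ) (N : Type u) [AddCommGroup N] [Module Rᵐᵒᵖ N]
    (K : Type u) [AddCommGroup K] [Module R K] : Prop :=
  Subsingleton (((tensorFunctor R N).leftDerived i).obj (ModuleCat.of R K))

/-- A right `R`-module `N` is *`n`-weak flat* if `Tor^R_{n+1}(N, U) = 0` for every
`n`-super finitely presented left `R`-module `U`. -/
def IsNWeakFlat (n : ℕ) (N : Type u) [AddCommGroup N] [Module Rᵐᵒᵖ N] : Prop :=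
  ∀ (U : ModuleCat.{u} R), IsNSuperFP R n U → torVanish R (n + 1) N U

/-- The right `R`-module `N` has *`n`-weak flat dimension at most `k`* if
`Tor^R_{k+1}(N, K) = 0` for every special super finitely presented left `R`-module
`K`. -/
def WFDimLE (n k : ℕ) (N : Type u) [AddCommGroup N] [Module Rᵐᵒᵖ N] : Prop :=
  ∀ (K : ModuleCat.{u} R), IsSpecialSFP R n K → torVanish R (k + 1) N K

/-! ### Character modules -/

/-- The character module `M⋆ = Hom_ℤ(M, ℚ/ℤ)` of a left `R`-module is a right
`R`-module via `(f · r) (m) = f (r · m)`. -/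
instance charModuleRight (M : Type u) [AddCommGroup M] [Module R M] :
    Module Rᵐᵒᵖ (CharacterModule M) where
  smul ρ f := f.comp (DistribMulAction.toAddMonoidHom M ρ.unop)
  one_smul f := CharacterModule.ext _ fun m => congrArg f (one_smul R m)
  mul_smul ρ σ f := CharacterModule.ext _ fun m => congrArg f (mul_smul σ.unop ρ.unop m)
  smul_zero ρ := CharacterModule.ext _ fun _ => rfl
  smul_add ρ f g := CharacterModule.ext _ fun _ => rfl
  add_smul ρ σ f := CharacterModule.ext _ fun m => by
    show f ((ρ.unop + σ.unop) • m) = f (ρ.unop • m) + f (σ.unop • m)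
    rw [add_smul, map_add]
  zero_smul f := CharacterModule.ext _ fun m => by
    show f ((0 : R) • m) = 0
    rw [zero_smul, map_zero]

/-- The character module `N⋆ = Hom_ℤ(N, ℚ/ℤ)` of a right `R`-module is a left
`R`-module via `(r · f) (m) = f (m · r)`. -/
instance charModuleLeft (N : Type u) [AddCommGroup N] [Module Rᵐᵒᵖ N] :
    Module R (CharacterModule N) where
  smul r f := f.comp (DistribMulAction.toAddMonoidHom N (MulOpposite.op r))
  one_smul f := CharacterModule.ext _ fun m => congrArg f (one_smul Rᵐᵒᵖ m)
  mul_smul r s f := CharacterModule.ext _ fun m => congrArg f (by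
    show (MulOpposite.op (r * s)) • m = (MulOpposite.op s) • (MulOpposite.op r) • m
    rw [← mul_smul, MulOpposite.op_mul])
  smul_zero r := CharacterModule.ext _ fun _ => rfl
  smul_add r f g := CharacterModule.ext _ fun _ => rfl
  add_smul r s f := CharacterModule.ext _ fun m => by
    show f ((MulOpposite.op r + MulOpposite.op s) • m)
      = f ((MulOpposite.op r) • m) + f ((MulOpposite.op s) • m)
    rw [add_smul, map_add]
  zero_smul f := CharacterModule.ext _ fun m => by
    show f ((0 : Rᵐᵒᵖ) • m) = 0
    rw [zero_smul, map_zero]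

/-! ### Purity and flatness -/

/-- A submodule `N` of a left `R`-module `M` is *pure* if for every right `R`-module
`L` the induced map `L ⊗_R N → L ⊗_R M` is injective. -/
def IsPureSubmodule (M : Type u) [AddCommGroup M] [Module R M] (N : Submodule R M) :
    Prop :=
  ∀ (L : Type u) [AddCommGroup L] [Module Rᵐᵒᵖ L],
    Function.Injective (balMapRight L N.subtype)

/-- A submodule `N` of a right `R`-module `M` is *pure* if for every left `R`-module
`L` the induced map `N ⊗_R L → M ⊗_R L` is injective. -/
def IsPureSubmoduleRight (M : Type u) [AddCommGroup M] [Module Rᵐᵒᵖ M]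
    (N : Submodule Rᵐᵒᵖ M) : Prop :=
  ∀ (L : Type u) [AddCommGroup L] [Module R L],
    Function.Injective (balMapLeft L N.subtype)

/-- A left `R`-module `M` is *flat* if tensoring with `M` preserves injectivity of
maps of right `R`-modules. -/
def IsFlatLeft (M : Type u) [AddCommGroup M] [Module R M] : Prop :=
  ∀ (A B : Type u) [AddCommGroup A] [Module Rᵐᵒᵖ A] [AddCommGroup B] [Module Rᵐᵒᵖ B]
    (g : A →ₗ[Rᵐᵒᵖ] B), Function.Injective g → Function.Injective (balMapLeft M g)

/-- The left `R`-module `K` has *projective dimension at most `m`*: there is an exact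
sequence `0 → P_m → ⋯ → P_1 → P_0 → K → 0` with all `P_i` projective (encoded by a
projective resolution vanishing in degrees `> m`). -/
def ProjDimLE (K : Type u) [AddCommGroup K] [Module R K] (m : ℕ) : Prop :=
  ∃ (P : ℕ → ModuleCat.{u} R) (d : ∀ i, P (i + 1) ⟶ P i) (ε : P 0 →ₗ[R] K),
    (∀ i, Module.Projective R (P i)) ∧
    Function.Surjective ε ∧
    Function.Exact (d 0) ε ∧
    (∀ i, Function.Exact (d (i + 1)) (d i)) ∧
    (∀ i, m < i → Subsingleton (P i))

end NWeak

namespace NWeakAux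

open NWeak

/-! ### Generalities: subsingleton vs `IsZero`, and transporting exactness -/

lemma subsingleton_iff_isZero_ab (X : AddCommGrpCat.{u}) : Subsingleton X ↔ IsZero X := by
  constructor
  · intro h
    exact @AddCommGrpCat.isZero_of_subsingleton X h
  · intro h
    have h1 : (𝟙 X : X ⟶ X) = 0 := h.eq_of_src _ _
    refine ⟨fun a b => ?_⟩
    have ha : a = (𝟙 X : X ⟶ X) a := rfl
    have hb : b = (𝟙 X : X ⟶ X) b := rfl
    rw [ha, hb, h1]
    simp

lemma subsingleton_iff_isZero_mod {S : Type*} [Ring S] (X : ModuleCat.{u} S) :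
    Subsingleton X ↔ IsZero X := by
  constructor
  · intro h
    exact @ModuleCat.isZero_of_subsingleton S _ X h
  · intro h
    have h1 : (𝟙 X : X ⟶ X) = 0 := h.eq_of_src _ _
    refine ⟨fun a b => ?_⟩
    have ha : a = (𝟙 X : X ⟶ X) a := rfl
    have hb : b = (𝟙 X : X ⟶ X) b := rfl
    rw [ha, hb, h1]
    rfl

lemma exact_of_ladder {A B C A' B' C' : Type*} [Zero C] [Zero C']
    (eA : A ≃ A') (eB : B ≃ B') (eC : C ≃ C')
    {f : A → B} {g : B → C} {f' : A' → B'} {g' : B' → C'}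
    (hf : ∀ a, f' (eA a) = eB (f a)) (hg : ∀ b, g' (eB b) = eC (g b)) (h0 : eC 0 = 0)
    (h : Function.Exact f g) : Function.Exact f' g' := by
  intro b'
  obtain ⟨b, rfl⟩ := eB.surjective b'
  rw [hg]
  constructor
  · intro hz
    have hb : g b = 0 := eC.injective (by rw [hz, h0])
    obtain ⟨a, rfl⟩ := (h b).mp hb
    exact ⟨eA a, hf a⟩
  · rintro ⟨a', ha'⟩
    obtain ⟨a, rfl⟩ := eA.surjective a'
    rw [hf] at ha'
    have hb : f a = b := eB.injective ha'
    subst hb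
    rw [(h (f a)).mpr ⟨a, rfl⟩, h0]

lemma exact_iff_of_ladder {A B C A' B' C' : Type*} [Zero C] [Zero C']
    (eA : A ≃ A') (eB : B ≃ B') (eC : C ≃ C')
    {f : A → B} {g : B → C} {f' : A' → B'} {g' : B' → C'}
    (hf : ∀ a, f' (eA a) = eB (f a)) (hg : ∀ b, g' (eB b) = eC (g b)) (h0 : eC 0 = 0) :
    Function.Exact f g ↔ Function.Exact f' g' := by
  refine ⟨exact_of_ladder eA eB eC hf hg h0,
    exact_of_ladder eA.symm eB.symm eC.symm ?_ ?_ ?_⟩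
  · intro a'
    apply eB.injective
    rw [← hf, Equiv.apply_symm_apply, Equiv.apply_symm_apply]
  · intro b'
    apply eC.injective
    rw [← hg, Equiv.apply_symm_apply, Equiv.apply_symm_apply]
  · apply eC.injective
    rw [Equiv.apply_symm_apply, h0]

/-! ### Exactness vs exactness of character duals -/

lemma char_exact_iff {A B C : Type u} [AddCommGroup A] [AddCommGroup B] [AddCommGroup C]
    (f : A →+ B) (g : B →+ C) :
    Function.Exact f g ↔
      Function.Exact (fun c : CharacterModule C => c.comp g)
        (fun c : CharacterModule B => c.comp f) := by
  constructor
  · intro h c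
    constructor
    · intro hc
      -- `c` kills the range of `f`, hence factors through `B ⧸ range f`, which embeds in `C`.
      have hker : ∀ b ∈ f.range, g b = 0 := by
        rintro b ⟨a, rfl⟩
        exact (h (f a)).mpr ⟨a, rfl⟩
      set gbar : B ⧸ f.range →+ C := QuotientAddGroup.lift f.range g hker with hgbar
      have hinj : Function.Injective gbar := by
        rw [injective_iff_map_eq_zero]
        intro x
        refine QuotientAddGroup.induction_on x fun b hb => ?_
        have : g b = 0 := hb
        exact (QuotientAddGroup.eq_zero_iff b).mpr ((h b).mp this)
      have hckill : ∀ b ∈ f.range, c b = 0 := by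
        rintro b ⟨a, rfl⟩
        exact DFunLike.congr_fun hc a
      set cbar : CharacterModule (B ⧸ f.range) := QuotientAddGroup.lift f.range c hckill
        with hcbar
      obtain ⟨c', hc'⟩ :=
        CharacterModule.dual_surjective_of_injective gbar.toIntLinearMap hinj cbar
      refine ⟨c', ?_⟩
      ext b
      have := DFunLike.congr_fun hc' (QuotientAddGroup.mk b : B ⧸ f.range)
      exact this
    · rintro ⟨c', rfl⟩
      ext a
      show c' (g (f a)) = 0
      rw [(h (f a)).mpr ⟨a, rfl⟩, map_zero]
  · intro h b
    constructor
    · intro hgb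
      by_contra hb
      have hqb : (QuotientAddGroup.mk b : B ⧸ f.range) ≠ 0 := fun h0 =>
        hb ((QuotientAddGroup.eq_zero_iff b).mp h0)
      obtain ⟨χ, hχ⟩ := CharacterModule.exists_character_apply_ne_zero_of_ne_zero hqb
      set c : CharacterModule B :=
        AddMonoidHom.comp χ (QuotientAddGroup.mk' f.range) with hcdef
      have hcf : c.comp f = 0 := by
        ext a
        show χ ((QuotientAddGroup.mk' f.range) (f a)) = 0
        rw [QuotientAddGroup.mk'_apply,
          (QuotientAddGroup.eq_zero_iff (f a)).mpr (AddMonoidHom.mem_range.mpr ⟨a, rfl⟩),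
          map_zero]
      obtain ⟨c', hc'⟩ := (h c).mp hcf
      apply hχ
      have : c b = 0 := by
        rw [← hc']
        show c' (g b) = 0
        rw [hgb, map_zero]
      exact this
    · rintro ⟨a, rfl⟩
      apply CharacterModule.eq_zero_of_character_apply
      intro c
      exact DFunLike.congr_fun ((h (c.comp g)).mpr ⟨c, rfl⟩) a

/-! ### The duality `Hom_R(K, M⋆) ≃ (M ⊗_R K)⋆` -/

variable {R : Type u} [Ring R] {M : Type u} [AddCommGroup M] [Module Rᵐᵒᵖ M]

/-- The character of `M ⊗[ℤ] K` induced by an `R`-linear map `K →ₗ[R] M⋆`. -/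
def charF (K : Type u) [AddCommGroup K] [Module R K] (φ : K →ₗ[R] CharacterModule M) :
    (M ⊗[ℤ] K) →+ AddCircle (1 : ℚ) :=
  TensorProduct.liftAddHom
    { toFun := fun a =>
        { toFun := fun b => φ b a
          map_zero' := by show φ (0 : K) a = 0; rw [map_zero]; rfl
          map_add' := fun b b' => by
            show φ (b + b') a = φ b a + φ b' a
            rw [map_add]; rfl }
      map_zero' := by ext b; exact map_zero (φ b)
      map_add' := fun a a' => by ext b; exact map_add (φ b) a a' }
    (fun z a b => by
      show φ b (z • a) = φ (z • b) a
      rw [map_zsmul (φ b), map_zsmul φ]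
      rfl)

@[simp] lemma charF_tmul (K : Type u) [AddCommGroup K] [Module R K]
    (φ : K →ₗ[R] CharacterModule M) (a : M) (b : K) :
    charF K φ (a ⊗ₜ[ℤ] b) = φ b a := rfl

lemma balRel_le_ker (K : Type u) [AddCommGroup K] [Module R K]
    (φ : K →ₗ[R] CharacterModule M) : balRel R M K ≤ (charF K φ).ker := by
  rw [balRel, AddSubgroup.closure_le]
  rintro x ⟨a, r, b, rfl⟩
  simp only [SetLike.mem_coe, AddMonoidHom.mem_ker, map_sub, charF_tmul]
  rw [map_smul φ r b]
  exact sub_self (φ b (MulOpposite.op r • a))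

/-- The character of `M ⊗_R K` induced by an `R`-linear map `K →ₗ[R] M⋆`. -/
def toChar {K : Type u} [AddCommGroup K] [Module R K] (φ : K →ₗ[R] CharacterModule M) :
    CharacterModule (RTensor R M K) :=
  QuotientAddGroup.lift _ (charF K φ) (fun _ hx => balRel_le_ker K φ hx)

@[simp] lemma toChar_mk {K : Type u} [AddCommGroup K] [Module R K]
    (φ : K →ₗ[R] CharacterModule M) (x : M ⊗[ℤ] K) :
    toChar φ (QuotientAddGroup.mk x : RTensor R M K) = charF K φ x := rfl

/-- The `R`-linear map `K →ₗ[R] M⋆` induced by a character of `M ⊗_R K`. -/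
def ofChar {K : Type u} [AddCommGroup K] [Module R K]
    (c : CharacterModule (RTensor R M K)) : K →ₗ[R] CharacterModule M where
  toFun b :=
    { toFun := fun a => c (QuotientAddGroup.mk (a ⊗ₜ[ℤ] b) : RTensor R M K)
      map_zero' := by
        show c (QuotientAddGroup.mk ((0 : M) ⊗ₜ[ℤ] b) : RTensor R M K) = 0
        rw [TensorProduct.zero_tmul]
        exact map_zero c
      map_add' := fun a a' => by
        show c (QuotientAddGroup.mk ((a + a') ⊗ₜ[ℤ] b) : RTensor R M K)
          = c (QuotientAddGroup.mk (a ⊗ₜ[ℤ] b) : RTensor R M K)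
            + c (QuotientAddGroup.mk (a' ⊗ₜ[ℤ] b) : RTensor R M K)
        rw [TensorProduct.add_tmul, QuotientAddGroup.mk_add]
        exact map_add c _ _ }
  map_add' b b' := by
    ext a
    show c (QuotientAddGroup.mk (a ⊗ₜ[ℤ] (b + b')) : RTensor R M K) = _
    rw [TensorProduct.tmul_add, QuotientAddGroup.mk_add]
    exact map_add c _ _
  map_smul' r b := by
    ext a
    show c (QuotientAddGroup.mk (a ⊗ₜ[ℤ] (r • b)) : RTensor R M K)
      = c (QuotientAddGroup.mk ((MulOpposite.op r • a) ⊗ₜ[ℤ] b) : RTensor R M K)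
    congr 1
    apply QuotientAddGroup.eq_iff_sub_mem.mpr
    have hmem : ((MulOpposite.op r • a) ⊗ₜ[ℤ] b - a ⊗ₜ[ℤ] (r • b)) ∈ balRel R M K :=
      AddSubgroup.subset_closure ⟨a, r, b, rfl⟩
    have := (balRel R M K).neg_mem hmem
    rwa [neg_sub] at this

/-- The duality bijection `Hom_R(K, M⋆) ≃ (M ⊗_R K)⋆`. -/
def homCharEquiv (K : Type u) [AddCommGroup K] [Module R K] :
    (K →ₗ[R] CharacterModule M) ≃ CharacterModule (RTensor R M K) where
  toFun := toChar
  invFun := ofChar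
  left_inv φ := by
    ext b a
    rfl
  right_inv c := by
    ext x
    refine QuotientAddGroup.induction_on x fun y => ?_
    refine TensorProduct.induction_on y ?_ (fun a b => rfl) ?_
    · exact (map_zero (toChar (ofChar c))).trans (map_zero c).symm
    · intro s t hs ht
      show toChar (ofChar c) (QuotientAddGroup.mk (s + t) : RTensor R M K)
        = c (QuotientAddGroup.mk (s + t) : RTensor R M K)
      exact (map_add (toChar (ofChar c)) (QuotientAddGroup.mk s : RTensor R M K) (QuotientAddGroup.mk t)).trans
        ((congrArg₂ (· + ·) hs ht).trans (map_add c _ _).symm)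

lemma toChar_zero (K : Type u) [AddCommGroup K] [Module R K] :
    toChar (M := M) (0 : K →ₗ[R] CharacterModule M) = 0 := by
  ext x
  refine QuotientAddGroup.induction_on x fun y => ?_
  show charF K 0 y = 0
  refine TensorProduct.induction_on y (map_zero _) (fun a b => rfl) ?_
  intro s t hs ht
  rw [map_add, hs, ht, add_zero]

lemma toChar_comp {K K' : Type u} [AddCommGroup K] [Module R K] [AddCommGroup K']
    [Module R K'] (f : K →ₗ[R] K') (φ : K' →ₗ[R] CharacterModule M)
    (x : RTensor R M K) :
    toChar (φ.comp f) x = toChar φ (balMapRight M f x) := by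
  refine QuotientAddGroup.induction_on x fun y => ?_
  rw [balMapRight_mk, toChar_mk, toChar_mk]
  refine TensorProduct.induction_on y ?_ (fun a b => rfl) ?_
  · rw [map_zero, map_zero, map_zero]
  · intro s t hs ht
    rw [map_add, map_add, map_add, hs, ht]

/-! ### Main comparison -/

open CategoryTheory.ProjectiveResolution in
lemma torVanish_iff_extVanish (R : Type u) [Ring R] (M : Type u) [AddCommGroup M]
    [Module Rᵐᵒᵖ M] (n : ℕ) (U : ModuleCat.{u} R) :
    torVanish R (n + 1) M U ↔ extVanish R (n + 1) U (CharacterModule M) := by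
  obtain ⟨P⟩ := (inferInstance : HasProjectiveResolution U).out
  let Y : ModuleCat.{u} R := ModuleCat.of R (CharacterModule M)
  let T := tensorFunctor R M
  let C := (T.mapHomologicalComplex (ComplexShape.down ℕ)).obj P.complex
  let D := P.complex.linearYonedaObj ℤ Y
  have hTor : torVanish R (n + 1) M U ↔ C.ExactAt (n + 1) := by
    refine Iff.trans (show torVanish R (n + 1) M U ↔
      Subsingleton ((T.leftDerived (n + 1)).obj U) from Iff.rfl) ?_
    rw [subsingleton_iff_isZero_ab ((T.leftDerived (n + 1)).obj U),
      (P.isoLeftDerivedObj T (n + 1)).isZero_iff]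
    exact (C.exactAt_iff_isZero_homology (n + 1)).symm
  have hExt : extVanish R (n + 1) U (CharacterModule M) ↔ D.ExactAt (n + 1) := by
    refine Iff.trans (show extVanish R (n + 1) U (CharacterModule M) ↔
      Subsingleton (((Ext ℤ (ModuleCat.{u} R) (n + 1)).obj (Opposite.op U)).obj Y)
        from Iff.rfl) ?_
    rw [subsingleton_iff_isZero_mod
      (((Ext ℤ (ModuleCat.{u} R) (n + 1)).obj (Opposite.op U)).obj Y),
      (P.isoExt (n + 1) Y).isZero_iff]
    exact (D.exactAt_iff_isZero_homology (n + 1)).symm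
  rw [hTor, hExt]
  rw [C.exactAt_iff' (n + 2) (n + 1) n (by simp) (by simp),
    D.exactAt_iff' n (n + 1) (n + 2) (by simp) (by simp)]
  rw [ShortComplex.ab_exact_iff_function_exact]
  rw [ShortComplex.moduleCat_exact_iff_range_eq_ker, eq_comm, ← LinearMap.exact_iff]
  have step1 : Function.Exact ⇑((C.sc' (n + 2) (n + 1) n).f)
      ⇑((C.sc' (n + 2) (n + 1) n).g) ↔
      Function.Exact (fun c : CharacterModule (C.X n) => c.comp (C.d (n + 1) n).hom)
        (fun c : CharacterModule (C.X (n + 1)) => c.comp (C.d (n + 2) (n + 1)).hom) :=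
    char_exact_iff (C.d (n + 2) (n + 1)).hom (C.d (n + 1) n).hom
  rw [step1]
  refine (exact_iff_of_ladder
    (ModuleCat.homEquiv.trans (homCharEquiv (M := M) (P.complex.X n)))
    (ModuleCat.homEquiv.trans (homCharEquiv (M := M) (P.complex.X (n + 1))))
    (ModuleCat.homEquiv.trans (homCharEquiv (M := M) (P.complex.X (n + 2))))
    (f := ⇑((D.sc' n (n + 1) (n + 2)).f)) (g := ⇑((D.sc' n (n + 1) (n + 2)).g))
    ?_ ?_ (toChar_zero (M := M) (P.complex.X (n + 2)))).symm
  · intro φ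
    ext x
    exact (toChar_comp (P.complex.d (n + 1) n).hom φ.hom x).symm
  · intro φ
    ext x
    exact (toChar_comp (P.complex.d (n + 2) (n + 1)).hom φ.hom x).symm

end NWeakAux

open NWeak in
/-- A right `R`-module `M` is `n`-weak flat if and only if its character
module `M⋆ = Hom_ℤ(M, ℚ/ℤ)` is an `n`-weak injective left `R`-module. -/
theorem isNWeakFlat_iff_isNWeakInjective_characterModule
    (R : Type u) [Ring R] (n : ℕ) (M : Type u) [AddCommGroup M] [Module Rᵐᵒᵖ M] :
    IsNWeakFlat R n M ↔ IsNWeakInjective R n (CharacterModule M) :=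
  forall_congr' fun U => imp_congr_right fun _ =>
    NWeakAux.torVanish_iff_extVanish R M n U
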